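/- For 0<ε≤1 and l₁,l₂≥ε, the lattice sum Σ_{(m,n,p)∈ℤ³, p≠0} (m²/l₁²+n²/l₂²+p²/ε²)^{-2} is at most c ε² for a constant c depending only on l₁ and l₂. -/

import Mathlib

open Real

private lemma tele (B : ℝ) (hB : 0 < B) :
    Summable (fun n : ℕ => (((n : ℝ) + B) * ((n : ℝ) + 1 + B))⁻¹) ∧
    ∑' n : ℕ, (((n : ℝ) + B) * ((n : ℝ) + 1 + B))⁻¹ ≤ B⁻¹ := by
  have hpos : ∀ n : ℕ, (0:ℝ) < ((n : ℝ) + B) := fun n => by positivity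
  have hterm : ∀ n : ℕ, (((n : ℝ) + B) * ((n : ℝ) + 1 + B))⁻¹
      = ((n : ℝ) + B)⁻¹ - ((n : ℝ) + 1 + B)⁻¹ := by
    intro n
    have h1 : ((n : ℝ) + B) ≠ 0 := (hpos n).ne'
    have h2 : ((n : ℝ) + 1 + B) ≠ 0 := by positivity
    field_simp
    ring
  have hsum : ∀ N : ℕ, ∑ n ∈ Finset.range N, (((n : ℝ) + B) * ((n : ℝ) + 1 + B))⁻¹ ≤ B⁻¹ := by
    intro N
    have : ∑ n ∈ Finset.range N, (((n : ℝ) + B) * ((n : ℝ) + 1 + B))⁻¹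
        = ∑ n ∈ Finset.range N, ((((n:ℕ) : ℝ) + B)⁻¹ - (((n+1 : ℕ) : ℝ) + B)⁻¹) := by
      refine Finset.sum_congr rfl fun n _ => ?_
      rw [hterm n]; push_cast; ring_nf
    rw [this, Finset.sum_range_sub' (fun n : ℕ => (((n:ℕ) : ℝ) + B)⁻¹)]
    have : (0:ℝ) ≤ (((N:ℕ):ℝ) + B)⁻¹ := by positivity
    simp only [Nat.cast_zero, zero_add]
    linarith
  have hnn : ∀ n : ℕ, (0:ℝ) ≤ (((n : ℝ) + B) * ((n : ℝ) + 1 + B))⁻¹ := fun n => by positivity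
  exact ⟨summable_of_sum_range_le hnn hsum, Real.tsum_le_of_sum_range_le hnn hsum⟩

private lemma natSum (L b : ℝ) (hL : 0 < L) (hb : 0 < b) :
    Summable (fun n : ℕ => ((((n : ℝ) + 1) ^ 2 / L ^ 2 + b ^ 2)⁻¹)) ∧
    ∑' n : ℕ, (((n : ℝ) + 1) ^ 2 / L ^ 2 + b ^ 2)⁻¹ ≤ 2 * L / b := by
  obtain ⟨hs, hle⟩ := tele (L * b) (by positivity)
  have key : ∀ n : ℕ, (((n : ℝ) + 1) ^ 2 / L ^ 2 + b ^ 2)⁻¹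
      ≤ 2 * L ^ 2 * (((n : ℝ) + L * b) * ((n : ℝ) + 1 + L * b))⁻¹ := by
    intro n
    have hn : (0:ℝ) ≤ (n : ℝ) := Nat.cast_nonneg n
    have h3 : ((n : ℝ) + L * b) * ((n : ℝ) + 1 + L * b)
        ≤ 2 * L ^ 2 * (((n : ℝ) + 1) ^ 2 / L ^ 2 + b ^ 2) := by
      have e : 2 * L ^ 2 * (((n : ℝ) + 1) ^ 2 / L ^ 2 + b ^ 2)
          = 2 * ((n : ℝ) + 1) ^ 2 + 2 * L ^ 2 * b ^ 2 := by
        field_simp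
      rw [e]
      nlinarith [sq_nonneg ((n : ℝ) + 1 - L * b), mul_pos hL hb]
    calc (((n : ℝ) + 1) ^ 2 / L ^ 2 + b ^ 2)⁻¹
        ≤ ((((n : ℝ) + L * b) * ((n : ℝ) + 1 + L * b)) / (2 * L ^ 2))⁻¹ := by
          apply inv_anti₀ (by positivity)
          rw [div_le_iff₀ (by positivity : (0:ℝ) < 2 * L ^ 2)]
          linarith [h3]
      _ = 2 * L ^ 2 * (((n : ℝ) + L * b) * ((n : ℝ) + 1 + L * b))⁻¹ := by
          rw [inv_div]; ring
  have hnn : ∀ n : ℕ, (0:ℝ) ≤ (((n : ℝ) + 1) ^ 2 / L ^ 2 + b ^ 2)⁻¹ := fun n => by positivity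
  have hs2 : Summable fun n : ℕ => 2 * L ^ 2 * (((n : ℝ) + L * b) * ((n : ℝ) + 1 + L * b))⁻¹ :=
    hs.mul_left _
  have hsum : Summable fun n : ℕ => (((n : ℝ) + 1) ^ 2 / L ^ 2 + b ^ 2)⁻¹ :=
    Summable.of_nonneg_of_le hnn key hs2
  refine ⟨hsum, ?_⟩
  calc ∑' n : ℕ, (((n : ℝ) + 1) ^ 2 / L ^ 2 + b ^ 2)⁻¹
      ≤ ∑' n : ℕ, 2 * L ^ 2 * (((n : ℝ) + L * b) * ((n : ℝ) + 1 + L * b))⁻¹ :=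
        Summable.tsum_le_tsum key hsum hs2
    _ = 2 * L ^ 2 * ∑' n : ℕ, (((n : ℝ) + L * b) * ((n : ℝ) + 1 + L * b))⁻¹ := tsum_mul_left
    _ ≤ 2 * L ^ 2 * (L * b)⁻¹ := by
        apply mul_le_mul_of_nonneg_left hle (by positivity)
    _ = 2 * L / b := by field_simp

private lemma intSum (L b : ℝ) (hL : 0 < L) (hb : 0 < b) :
    Summable (fun m : ℤ => (((m : ℝ) ^ 2 / L ^ 2 + b ^ 2)⁻¹)) ∧
    ∑' m : ℤ, ((m : ℝ) ^ 2 / L ^ 2 + b ^ 2)⁻¹ ≤ b⁻¹ ^ 2 + 4 * L / b := by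
  obtain ⟨hs, hle⟩ := natSum L b hL hb
  set f : ℤ → ℝ := fun m => ((m : ℝ) ^ 2 / L ^ 2 + b ^ 2)⁻¹ with hf
  have e1 : (fun n : ℕ => f ((n : ℤ) + 1)) = fun n : ℕ =>
      (((n : ℝ) + 1) ^ 2 / L ^ 2 + b ^ 2)⁻¹ := by
    funext n; simp only [hf]; push_cast; ring_nf
  have e2 : (fun n : ℕ => f (-((n : ℤ) + 1))) = fun n : ℕ =>
      (((n : ℝ) + 1) ^ 2 / L ^ 2 + b ^ 2)⁻¹ := by
    funext n; simp only [hf]; push_cast; ring_nf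
  have hs1 : Summable fun n : ℕ => f n := by
    rw [← summable_nat_add_iff 1]
    have : (fun n : ℕ => f ((n : ℕ) + 1 : ℕ)) = fun n : ℕ => f ((n : ℤ) + 1) := by
      funext n; norm_cast
    rw [this, e1]; exact hs
  have hs2 : Summable fun n : ℕ => f (-((n : ℤ) + 1)) := by rw [e2]; exact hs
  refine ⟨Summable.of_nat_of_neg_add_one hs1 hs2, ?_⟩
  rw [tsum_of_nat_of_neg_add_one hs1 hs2]
  have h0 : ∑' n : ℕ, f n = f 0 + ∑' n : ℕ, f ((n : ℕ) + 1 : ℕ) := Summable.tsum_eq_zero_add hs1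
  have e3 : (fun n : ℕ => f ((n : ℕ) + 1 : ℕ)) = fun n : ℕ => f ((n : ℤ) + 1) := by
    funext n; norm_cast
  have hf0 : f 0 = b⁻¹ ^ 2 := by simp [hf, inv_pow]
  rw [h0, hf0, e3, e1, e2]
  refine le_trans (add_le_add (add_le_add le_rfl hle) hle) (le_of_eq (by ring))

private lemma pSq : Summable (fun n : ℕ => (((n : ℝ) + 1) ^ 2)⁻¹) ∧
    ∑' n : ℕ, (((n : ℝ) + 1) ^ 2)⁻¹ ≤ 2 := by
  obtain ⟨hs, hle⟩ := tele 1 one_pos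
  have key : ∀ n : ℕ, (((n : ℝ) + 1) ^ 2)⁻¹ ≤ 2 * (((n : ℝ) + 1) * ((n : ℝ) + 1 + 1))⁻¹ := by
    intro n
    have hn : (0:ℝ) ≤ (n : ℝ) := Nat.cast_nonneg n
    rw [show (2:ℝ) * (((n : ℝ) + 1) * ((n : ℝ) + 1 + 1))⁻¹
        = ((((n : ℝ) + 1) * ((n : ℝ) + 1 + 1)) / 2)⁻¹ by rw [inv_div]; ring]
    apply inv_anti₀ (by positivity)
    nlinarith
  have hnn : ∀ n : ℕ, (0:ℝ) ≤ (((n : ℝ) + 1) ^ 2)⁻¹ := fun n => by positivity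
  have hs2 : Summable fun n : ℕ => 2 * (((n : ℝ) + 1) * ((n : ℝ) + 1 + 1))⁻¹ := hs.mul_left _
  have hsum : Summable fun n : ℕ => (((n : ℝ) + 1) ^ 2)⁻¹ :=
    Summable.of_nonneg_of_le hnn key hs2
  refine ⟨hsum, ?_⟩
  calc ∑' n : ℕ, (((n : ℝ) + 1) ^ 2)⁻¹
      ≤ ∑' n : ℕ, 2 * (((n : ℝ) + 1) * ((n : ℝ) + 1 + 1))⁻¹ := Summable.tsum_le_tsum key hsum hs2
    _ = 2 * ∑' n : ℕ, (((n : ℝ) + 1) * ((n : ℝ) + 1 + 1))⁻¹ := tsum_mul_left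
    _ ≤ 2 * 1⁻¹ := by apply mul_le_mul_of_nonneg_left hle (by norm_num)
    _ = 2 := by norm_num

private lemma termBound (l₁ l₂ ε : ℝ) (hl₁ : 0 < l₁) (hl₂ : 0 < l₂) (hε : 0 < ε)
    (m n p : ℤ) (hp : p ≠ 0) :
    ((m : ℝ) ^ 2 / l₁ ^ 2 + (n : ℝ) ^ 2 / l₂ ^ 2 + (p : ℝ) ^ 2 / ε ^ 2)⁻¹ ^ 2
      ≤ ((m : ℝ) ^ 2 / l₁ ^ 2 + (p : ℝ) ^ 2 / (2 * ε ^ 2))⁻¹ *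
        ((n : ℝ) ^ 2 / l₂ ^ 2 + (p : ℝ) ^ 2 / (2 * ε ^ 2))⁻¹ := by
  have hpR : ((p : ℝ)) ≠ 0 := Int.cast_ne_zero.mpr hp
  have hp2 : (0:ℝ) < (p : ℝ) ^ 2 := by positivity
  set a : ℝ := (m : ℝ) ^ 2 / l₁ ^ 2 + (p : ℝ) ^ 2 / (2 * ε ^ 2) with ha
  set b : ℝ := (n : ℝ) ^ 2 / l₂ ^ 2 + (p : ℝ) ^ 2 / (2 * ε ^ 2) with hb
  have hA : 0 < a := by positivity
  have hB : 0 < b := by positivity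
  have hab : (m : ℝ) ^ 2 / l₁ ^ 2 + (n : ℝ) ^ 2 / l₂ ^ 2 + (p : ℝ) ^ 2 / ε ^ 2 = a + b := by
    rw [ha, hb]; field_simp; ring
  rw [hab, inv_pow, ← mul_inv]
  apply inv_anti₀ (by positivity)
  nlinarith [sq_nonneg (a - b), mul_pos hA hB]

private lemma intSum2 (L ε : ℝ) (hL : 0 < L) (hε : 0 < ε) (hε1 : ε ≤ 1) (p : ℤ) (hp : p ≠ 0) :
    Summable (fun m : ℤ => (((m : ℝ) ^ 2 / L ^ 2 + (p : ℝ) ^ 2 / (2 * ε ^ 2))⁻¹)) ∧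
    ∑' m : ℤ, ((m : ℝ) ^ 2 / L ^ 2 + (p : ℝ) ^ 2 / (2 * ε ^ 2))⁻¹
      ≤ (2 + 8 * L) * (ε / |(p : ℝ)|) := by
  have hpR : ((p : ℝ)) ≠ 0 := Int.cast_ne_zero.mpr hp
  have hP1 : (1 : ℝ) ≤ |(p : ℝ)| := by
    rw [← Int.cast_abs]
    exact_mod_cast Int.one_le_abs (by omega)
  have hP0 : (0 : ℝ) < |(p : ℝ)| := lt_of_lt_of_le one_pos hP1
  have hsqrt2 : Real.sqrt 2 ≤ 2 := by
    nlinarith [Real.sq_sqrt (by norm_num : (0:ℝ) ≤ 2), Real.sqrt_nonneg 2]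
  have hsqrt2' : (0:ℝ) < Real.sqrt 2 := Real.sqrt_pos.mpr (by norm_num)
  set b : ℝ := |(p : ℝ)| / (Real.sqrt 2 * ε) with hbdef
  have hb : 0 < b := by positivity
  have hbsq : b ^ 2 = (p : ℝ) ^ 2 / (2 * ε ^ 2) := by
    rw [hbdef, div_pow, mul_pow, sq_abs, Real.sq_sqrt (by norm_num : (0:ℝ) ≤ 2)]
  obtain ⟨hs, hle⟩ := intSum L b hL hb
  have efun : (fun m : ℤ => ((m : ℝ) ^ 2 / L ^ 2 + (p : ℝ) ^ 2 / (2 * ε ^ 2))⁻¹)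
      = fun m : ℤ => ((m : ℝ) ^ 2 / L ^ 2 + b ^ 2)⁻¹ := by
    funext m; rw [hbsq]
  rw [efun]
  refine ⟨hs, hle.trans ?_⟩
  set r : ℝ := ε / |(p : ℝ)| with hrdef
  have hr0 : 0 < r := by positivity
  have hr1 : r ≤ 1 := by rw [hrdef, div_le_one hP0]; linarith
  have hbinv : b⁻¹ = Real.sqrt 2 * r := by
    rw [hbdef, inv_div, hrdef]; field_simp
  have h1 : b⁻¹ ^ 2 ≤ 2 * r := by
    rw [hbinv, mul_pow, Real.sq_sqrt (by norm_num : (0:ℝ) ≤ 2)]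
    nlinarith
  have h2 : 4 * L / b ≤ 8 * L * r := by
    rw [div_eq_mul_inv, hbinv]
    nlinarith [mul_nonneg (mul_nonneg (sub_nonneg.mpr hsqrt2) hL.le) hr0.le]
  calc b⁻¹ ^ 2 + 4 * L / b ≤ 2 * r + 8 * L * r := add_le_add h1 h2
    _ = (2 + 8 * L) * r := by ring

private lemma zSqE : ∑' p : ℤ, ENNReal.ofReal (((p : ℝ) ^ 2)⁻¹) ≤ ENNReal.ofReal 4 := by
  obtain ⟨hs, hle⟩ := pSq
  set g : ℤ → ENNReal := fun p => ENNReal.ofReal (((p : ℝ) ^ 2)⁻¹) with hg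
  have hnat : ∑' n : ℕ, g n ≤ ENNReal.ofReal 2 := by
    rw [tsum_eq_zero_add' (f := fun n : ℕ => g (n : ℤ)) ENNReal.summable]
    have e0 : g ((0 : ℕ) : ℤ) = 0 := by simp [hg]
    have e1 : (fun n : ℕ => g ((n + 1 : ℕ) : ℤ)) =
        fun n : ℕ => ENNReal.ofReal ((((n : ℝ) + 1) ^ 2)⁻¹) := by
      funext n; simp only [hg]; norm_num
    rw [e0, e1, zero_add, ← ENNReal.ofReal_tsum_of_nonneg (fun n => by positivity) hs]
    exact ENNReal.ofReal_le_ofReal hle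
  have hneg : ∑' n : ℕ, g (-((n : ℤ) + 1)) ≤ ENNReal.ofReal 2 := by
    have e1 : (fun n : ℕ => g (-((n : ℤ) + 1))) =
        fun n : ℕ => ENNReal.ofReal ((((n : ℝ) + 1) ^ 2)⁻¹) := by
      funext n; simp only [hg]; push_cast; ring_nf
    rw [e1, ← ENNReal.ofReal_tsum_of_nonneg (fun n => by positivity) hs]
    exact ENNReal.ofReal_le_ofReal hle
  calc ∑' p : ℤ, g p = (∑' n : ℕ, g n) + ∑' n : ℕ, g (-((n : ℤ) + 1)) :=
        tsum_of_nat_of_neg_add_one (f := g) ENNReal.summable ENNReal.summable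
    _ ≤ ENNReal.ofReal 2 + ENNReal.ofReal 2 := add_le_add hnat hneg
    _ = ENNReal.ofReal 4 := by rw [← ENNReal.ofReal_add] <;> norm_num

private def latticeEquiv : {k : ℤ × ℤ × ℤ // k.2.2 ≠ 0} ≃ ({p : ℤ // p ≠ 0} × ℤ × ℤ) where
  toFun k := (⟨k.1.2.2, k.2⟩, k.1.1, k.1.2.1)
  invFun x := ⟨(x.2.1, x.2.2, x.1.1), x.1.2⟩
  left_inv := fun _ => rfl
  right_inv := fun _ => rfl

/-- The lattice sum `Σ_{(m,n,p), p≠0} (m²/l₁² + n²/l₂² + p²/ε²)^{-2}` is at most `c ε²`,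
with `c` depending only on `l₁, l₂`. -/
theorem lattice_sum_bound (l₁ l₂ : ℝ) (hl₁ : 0 < l₁) (hl₂ : 0 < l₂) :
    ∃ c : ℝ, 0 < c ∧
      ∀ ε : ℝ, 0 < ε → ε ≤ 1 → ε ≤ l₁ → ε ≤ l₂ →
        (∑' k : {k : ℤ × ℤ × ℤ // k.2.2 ≠ 0},
          (((k : ℤ × ℤ × ℤ).1 : ℝ) ^ 2 / l₁ ^ 2 + ((k : ℤ × ℤ × ℤ).2.1 : ℝ) ^ 2 / l₂ ^ 2 +
              ((k : ℤ × ℤ × ℤ).2.2 : ℝ) ^ 2 / ε ^ 2)⁻¹ ^ 2)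
          ≤ c * ε ^ 2 := by
  refine ⟨4 * ((2 + 8 * l₁) * (2 + 8 * l₂)), by positivity, ?_⟩
  intro ε hε hε1 hεl₁ hεl₂
  set K₁ : ℝ := 2 + 8 * l₁ with hK₁
  set K₂ : ℝ := 2 + 8 * l₂ with hK₂
  set T : {k : ℤ × ℤ × ℤ // k.2.2 ≠ 0} → ℝ := fun k =>
    (((k : ℤ × ℤ × ℤ).1 : ℝ) ^ 2 / l₁ ^ 2 + ((k : ℤ × ℤ × ℤ).2.1 : ℝ) ^ 2 / l₂ ^ 2 +
        ((k : ℤ × ℤ × ℤ).2.2 : ℝ) ^ 2 / ε ^ 2)⁻¹ ^ 2 with hT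
  have hTnn : ∀ k, 0 ≤ T k := fun k => by rw [hT]; positivity
  set A : ℤ → ℤ → ENNReal := fun p m =>
    ENNReal.ofReal (((m : ℝ) ^ 2 / l₁ ^ 2 + (p : ℝ) ^ 2 / (2 * ε ^ 2))⁻¹) with hA
  set B : ℤ → ℤ → ENNReal := fun p n =>
    ENNReal.ofReal (((n : ℝ) ^ 2 / l₂ ^ 2 + (p : ℝ) ^ 2 / (2 * ε ^ 2))⁻¹) with hB
  have hterm : ∀ k : {k : ℤ × ℤ × ℤ // k.2.2 ≠ 0},
      ENNReal.ofReal (T k) ≤ A k.1.2.2 k.1.1 * B k.1.2.2 k.1.2.1 := by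
    intro k
    rw [hA, hB, ← ENNReal.ofReal_mul (by positivity)]
    exact ENNReal.ofReal_le_ofReal
      (termBound l₁ l₂ ε hl₁ hl₂ hε k.1.1 k.1.2.1 k.1.2.2 k.2)
  have hAsum : ∀ q : {p : ℤ // p ≠ 0},
      ∑' m : ℤ, A q.1 m ≤ ENNReal.ofReal (K₁ * (ε / |((q.1 : ℤ) : ℝ)|)) := by
    intro q
    obtain ⟨hs, hle⟩ := intSum2 l₁ ε hl₁ hε hε1 q.1 q.2
    rw [hA, ← ENNReal.ofReal_tsum_of_nonneg (fun m => by positivity) hs]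
    exact ENNReal.ofReal_le_ofReal hle
  have hBsum : ∀ q : {p : ℤ // p ≠ 0},
      ∑' n : ℤ, B q.1 n ≤ ENNReal.ofReal (K₂ * (ε / |((q.1 : ℤ) : ℝ)|)) := by
    intro q
    obtain ⟨hs, hle⟩ := intSum2 l₂ ε hl₂ hε hε1 q.1 q.2
    rw [hB, ← ENNReal.ofReal_tsum_of_nonneg (fun m => by positivity) hs]
    exact ENNReal.ofReal_le_ofReal hle
  have hF : ∑' k : {k : ℤ × ℤ × ℤ // k.2.2 ≠ 0}, ENNReal.ofReal (T k)
      ≤ ENNReal.ofReal (4 * (K₁ * K₂) * ε ^ 2) := by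
    calc ∑' k : {k : ℤ × ℤ × ℤ // k.2.2 ≠ 0}, ENNReal.ofReal (T k)
        ≤ ∑' k : {k : ℤ × ℤ × ℤ // k.2.2 ≠ 0}, A k.1.2.2 k.1.1 * B k.1.2.2 k.1.2.1 :=
          ENNReal.tsum_le_tsum hterm
      _ = ∑' x : {p : ℤ // p ≠ 0} × ℤ × ℤ, A x.1.1 x.2.1 * B x.1.1 x.2.2 :=
          (latticeEquiv.tsum_eq (fun x : {p : ℤ // p ≠ 0} × ℤ × ℤ =>
            A x.1.1 x.2.1 * B x.1.1 x.2.2)).symm ▸ rfl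
      _ = ∑' q : {p : ℤ // p ≠ 0}, ∑' y : ℤ × ℤ, A q.1 y.1 * B q.1 y.2 :=
          ENNReal.tsum_prod'
      _ = ∑' q : {p : ℤ // p ≠ 0}, ∑' m : ℤ, ∑' n : ℤ, A q.1 m * B q.1 n :=
          tsum_congr fun q => ENNReal.tsum_prod'
      _ = ∑' q : {p : ℤ // p ≠ 0}, (∑' m : ℤ, A q.1 m) * (∑' n : ℤ, B q.1 n) := by
          refine tsum_congr fun q => ?_
          calc ∑' m : ℤ, ∑' n : ℤ, A q.1 m * B q.1 n
              = ∑' m : ℤ, A q.1 m * ∑' n : ℤ, B q.1 n :=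
                tsum_congr fun m => ENNReal.tsum_mul_left
            _ = (∑' m : ℤ, A q.1 m) * ∑' n : ℤ, B q.1 n := ENNReal.tsum_mul_right
      _ ≤ ∑' q : {p : ℤ // p ≠ 0},
            ENNReal.ofReal (K₁ * (ε / |((q.1 : ℤ) : ℝ)|)) *
            ENNReal.ofReal (K₂ * (ε / |((q.1 : ℤ) : ℝ)|)) :=
          ENNReal.tsum_le_tsum fun q => mul_le_mul' (hAsum q) (hBsum q)
      _ = ∑' q : {p : ℤ // p ≠ 0},
            ENNReal.ofReal (K₁ * K₂ * ε ^ 2) * ENNReal.ofReal ((((q.1 : ℤ) : ℝ)) ^ 2)⁻¹ := by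
          refine tsum_congr fun q => ?_
          have hq : (((q.1 : ℤ) : ℝ)) ≠ 0 := Int.cast_ne_zero.mpr q.2
          have haq : |((q.1 : ℤ) : ℝ)| ≠ 0 := abs_ne_zero.mpr hq
          rw [← ENNReal.ofReal_mul (by positivity), ← ENNReal.ofReal_mul (by positivity)]
          congr 1
          have habs : |((q.1 : ℤ) : ℝ)| * |((q.1 : ℤ) : ℝ)| = ((q.1 : ℤ) : ℝ) ^ 2 := by
            rw [abs_mul_abs_self]; ring
          field_simp
          simp only [sq_abs]; ring
      _ = ENNReal.ofReal (K₁ * K₂ * ε ^ 2) *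
            ∑' q : {p : ℤ // p ≠ 0}, ENNReal.ofReal ((((q.1 : ℤ) : ℝ)) ^ 2)⁻¹ :=
          ENNReal.tsum_mul_left
      _ ≤ ENNReal.ofReal (K₁ * K₂ * ε ^ 2) * ENNReal.ofReal 4 := by
          apply mul_le_mul_right
          calc ∑' q : {p : ℤ // p ≠ 0}, ENNReal.ofReal ((((q.1 : ℤ) : ℝ)) ^ 2)⁻¹
              ≤ ∑' p : ℤ, ENNReal.ofReal (((p : ℝ) ^ 2)⁻¹) :=
                ENNReal.tsum_comp_le_tsum_of_injective Subtype.val_injective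
                  (fun p : ℤ => ENNReal.ofReal (((p : ℝ) ^ 2)⁻¹))
            _ ≤ ENNReal.ofReal 4 := zSqE
      _ = ENNReal.ofReal (4 * (K₁ * K₂) * ε ^ 2) := by
          rw [← ENNReal.ofReal_mul (by positivity)]
          congr 1
          ring
  have hne : (∑' k : {k : ℤ × ℤ × ℤ // k.2.2 ≠ 0}, ENNReal.ofReal (T k)) ≠ ⊤ :=
    (hF.trans_lt ENNReal.ofReal_lt_top).ne
  calc ∑' k : {k : ℤ × ℤ × ℤ // k.2.2 ≠ 0}, T k
      = (∑' k : {k : ℤ × ℤ × ℤ // k.2.2 ≠ 0}, ENNReal.ofReal (T k)).toReal := by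
        rw [ENNReal.tsum_toReal_eq (fun k => ENNReal.ofReal_ne_top)]
        exact (tsum_congr fun k => ENNReal.toReal_ofReal (hTnn k)).symm
    _ ≤ (ENNReal.ofReal (4 * (K₁ * K₂) * ε ^ 2)).toReal :=
        ENNReal.toReal_mono ENNReal.ofReal_ne_top hF
    _ = 4 * (K₁ * K₂) * ε ^ 2 := ENNReal.toReal_ofReal (by positivity)
    _ = 4 * ((2 + 8 * l₁) * (2 + 8 * l₂)) * ε ^ 2 := by rw [hK₁, hK₂]
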